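/- arXiv:math/0605231 — 6 statements merged into one kernel-verified Lean document; each statement's English description precedes it below -/
import Mathlib

section
/- Let p ≥ 3 be prime, α, β, γ ∈ Q_p with |α|_p, |β|_p, |γ|_p ≤ 1/p, and set a = exp_p(α), b = exp_p(β), c = exp_p(γ), f(x) = (a x + b)/(c + x). Then for all x, y in the set D = {z ∈ Q_p : |z|_p = 1 and |z − 1|_p ≤ 1/p}, one has |c + x|_p = 1, |c + y|_p = 1, and |f(x) − f(y)|_p ≤ (1/p)|x − y|_p. -/
noncomputable def pexp (p : ℕ) [Fact p.Prime] (x : ℚ_[p]) : ℚ_[p] :=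
  NormedSpace.exp x

noncomputable def plog (p : ℕ) [Fact p.Prime] (z : ℚ_[p]) : ℚ_[p] :=
  ∑' n : ℕ, (-1) ^ n * (z - 1) ^ (n + 1) / (n + 1)

section Aux

variable (p : ℕ) [Fact p.Prime]

lemma aux_two_mul_val_le (hp : 3 ≤ p) (n : ℕ) :
    2 * padicValNat p (Nat.factorial n) ≤ n :=
  calc 2 * padicValNat p (Nat.factorial n) ≤ (p - 1) * padicValNat p (Nat.factorial n) :=
        Nat.mul_le_mul_right _ (by omega)
    _ = n - (p.digits n).sum := sub_one_mul_padicValNat_factorial n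
    _ ≤ n := Nat.sub_le _ _

lemma aux_val_le (hp : 3 ≤ p) (n : ℕ) :
    padicValNat p (Nat.factorial n) ≤ n - 1 := by
  have h := aux_two_mul_val_le p hp n
  match n with
  | 0 => simpa using h
  | 1 => simpa [Nat.factorial] using h
  | (n+2) => omega

lemma aux_norm_factorial (n : ℕ) :
    ‖((Nat.factorial n : ℕ) : ℚ_[p])‖ = (p : ℝ) ^ (-(padicValNat p (Nat.factorial n) : ℤ)) := by
  rw [Padic.norm_eq_zpow_neg_valuation (by exact_mod_cast n.factorial_ne_zero), Padic.valuation_natCast]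

lemma aux_term_le (u : ℚ_[p]) (hu : ‖u‖ ≤ (p : ℝ)⁻¹) (n : ℕ) :
    ‖u ^ n / ((Nat.factorial n : ℕ) : ℚ_[p])‖ ≤ (p : ℝ) ^ ((padicValNat p (Nat.factorial n) : ℤ) - n) := by
  have hp0 : (0 : ℝ) < p := by exact_mod_cast (Fact.out : p.Prime).pos
  rw [norm_div, norm_pow, aux_norm_factorial, div_eq_mul_inv, ← zpow_neg, neg_neg]
  have h1 : ‖u‖ ^ n ≤ (p : ℝ) ^ (-(n : ℤ)) := by
    rw [zpow_neg, zpow_natCast, ← inv_pow]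
    exact pow_le_pow_left₀ (norm_nonneg u) hu n
  calc ‖u‖ ^ n * (p : ℝ) ^ (padicValNat p (Nat.factorial n) : ℤ)
      ≤ (p : ℝ) ^ (-(n : ℤ)) * (p : ℝ) ^ (padicValNat p (Nat.factorial n) : ℤ) :=
        mul_le_mul_of_nonneg_right h1 (zpow_nonneg hp0.le _)
    _ = (p : ℝ) ^ ((padicValNat p (Nat.factorial n) : ℤ) - n) := by
        rw [← zpow_add₀ hp0.ne']; ring_nf

lemma aux_term_le' (hp : 3 ≤ p) (u : ℚ_[p]) (hu : ‖u‖ ≤ (p : ℝ)⁻¹) (n : ℕ) (hn : 1 ≤ n) :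
    ‖u ^ n / ((Nat.factorial n : ℕ) : ℚ_[p])‖ ≤ (p : ℝ)⁻¹ := by
  have hp1 : (1 : ℝ) < p := by exact_mod_cast (Fact.out : p.Prime).one_lt
  refine (aux_term_le p u hu n).trans ?_
  rw [← zpow_neg_one]
  apply zpow_le_zpow_right₀ hp1.le
  have := aux_val_le p hp n
  omega

lemma aux_summable (hp : 3 ≤ p) (u : ℚ_[p]) (hu : ‖u‖ ≤ (p : ℝ)⁻¹) :
    Summable (fun n : ℕ => u ^ n / ((Nat.factorial n : ℕ) : ℚ_[p])) := by
  have hp0 : (0 : ℝ) < p := by exact_mod_cast (Fact.out : p.Prime).pos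
  have hp1 : (1 : ℝ) < p := by exact_mod_cast (Fact.out : p.Prime).one_lt
  have hinv1 : (p : ℝ)⁻¹ < 1 := inv_lt_one_of_one_lt₀ hp1
  apply Summable.of_norm
  refine Summable.of_nonneg_of_le (fun n => norm_nonneg _) (fun n => ?_)
    (summable_geometric_of_lt_one (Real.sqrt_nonneg ((p : ℝ)⁻¹))
      ((Real.sqrt_lt' one_pos).mpr (by simpa using hinv1)))
  have hsq : ‖u ^ n / ((Nat.factorial n : ℕ) : ℚ_[p])‖ ^ 2 ≤ ((p : ℝ)⁻¹) ^ n := by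
    have h1 := aux_term_le p u hu n
    calc ‖u ^ n / ((Nat.factorial n : ℕ) : ℚ_[p])‖ ^ 2
        ≤ ((p : ℝ) ^ ((padicValNat p (Nat.factorial n) : ℤ) - n)) ^ 2 :=
          pow_le_pow_left₀ (norm_nonneg _) h1 2
      _ = (p : ℝ) ^ (((padicValNat p (Nat.factorial n) : ℤ) - n) * 2) := by
          rw [← zpow_natCast ((p:ℝ) ^ _), ← zpow_mul]; norm_num
      _ ≤ (p : ℝ) ^ (-(n : ℤ)) := by
          apply zpow_le_zpow_right₀ (le_of_lt hp1)
          have := aux_two_mul_val_le p hp n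
          omega
      _ = ((p : ℝ)⁻¹) ^ n := by rw [zpow_neg, zpow_natCast, inv_pow]
  have h2 : ‖u ^ n / ((Nat.factorial n : ℕ) : ℚ_[p])‖ ^ 2 ≤ (Real.sqrt ((p : ℝ)⁻¹) ^ n) ^ 2 := by
    calc ‖u ^ n / ((Nat.factorial n : ℕ) : ℚ_[p])‖ ^ 2 ≤ ((p : ℝ)⁻¹) ^ n := hsq
      _ = (Real.sqrt ((p : ℝ)⁻¹) ^ n) ^ 2 := by
          rw [← pow_mul, mul_comm n 2, pow_mul, Real.sq_sqrt (by positivity)]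
  exact (pow_le_pow_iff_left₀ (norm_nonneg _) (pow_nonneg (Real.sqrt_nonneg _) _)
    (two_ne_zero)).mp h2

lemma aux_pexp_sub_one (hp : 3 ≤ p) (u : ℚ_[p]) (hu : ‖u‖ ≤ (p : ℝ)⁻¹) :
    ‖pexp p u - 1‖ ≤ (p : ℝ)⁻¹ := by
  have hs := aux_summable p hp u hu
  have hrw : pexp p u = ∑' n : ℕ, u ^ n / ((Nat.factorial n : ℕ) : ℚ_[p]) := by
    rw [pexp, NormedSpace.exp_eq_tsum_div]
  rw [hrw, hs.tsum_eq_zero_add]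
  simp only [pow_zero, Nat.factorial_zero, Nat.cast_one, div_one, add_sub_cancel_left]
  exact IsUltrametricDist.norm_tsum_le_of_forall_le
    (fun n => aux_term_le' p hp u hu (n + 1) (by omega))

lemma aux_pexp_norm (hp : 3 ≤ p) (u : ℚ_[p]) (hu : ‖u‖ ≤ (p : ℝ)⁻¹) :
    ‖pexp p u‖ = 1 := by
  have hp1 : (1 : ℝ) < p := by exact_mod_cast (Fact.out : p.Prime).one_lt
  have h1 : ‖pexp p u - 1‖ < 1 :=
    lt_of_le_of_lt (aux_pexp_sub_one p hp u hu) (inv_lt_one_of_one_lt₀ hp1)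
  have heq : pexp p u = 1 + (pexp p u - 1) := by ring
  rw [heq, Padic.add_eq_max_of_ne (by rw [norm_one]; exact (h1.trans_le (le_refl 1)).ne'),
    norm_one, max_eq_left h1.le]

end Aux

theorem stmt6 (p : ℕ) [Fact p.Prime] (hp : 3 ≤ p) (α β γ : ℚ_[p])
    (hα : ‖α‖ ≤ (p : ℝ)⁻¹) (hβ : ‖β‖ ≤ (p : ℝ)⁻¹) (hγ : ‖γ‖ ≤ (p : ℝ)⁻¹)
    (a b c : ℚ_[p]) (ha : a = pexp p α) (hb : b = pexp p β) (hc : c = pexp p γ)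
    (f : ℚ_[p] → ℚ_[p]) (hf : ∀ x, f x = (a * x + b) / (c + x))
    (x y : ℚ_[p]) (hx : ‖x‖ = 1 ∧ ‖x - 1‖ ≤ (p : ℝ)⁻¹) (hy : ‖y‖ = 1 ∧ ‖y - 1‖ ≤ (p : ℝ)⁻¹) :
    ‖c + x‖ = 1 ∧ ‖c + y‖ = 1 ∧ ‖f x - f y‖ ≤ (p : ℝ)⁻¹ * ‖x - y‖ := by
  obtain ⟨hx1, hx2⟩ := hx
  obtain ⟨hy1, hy2⟩ := hy
  have hp1 : (1 : ℝ) < p := by exact_mod_cast (Fact.out : p.Prime).one_lt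
  have hinv1 : (p : ℝ)⁻¹ < 1 := inv_lt_one_of_one_lt₀ hp1
  have hinv0 : (0 : ℝ) ≤ (p : ℝ)⁻¹ := by positivity
  have ha1 : ‖a - 1‖ ≤ (p : ℝ)⁻¹ := ha ▸ aux_pexp_sub_one p hp α hα
  have hb1 : ‖b - 1‖ ≤ (p : ℝ)⁻¹ := hb ▸ aux_pexp_sub_one p hp β hβ
  have hc1 : ‖c - 1‖ ≤ (p : ℝ)⁻¹ := hc ▸ aux_pexp_sub_one p hp γ hγ
  have h2 : ‖(2 : ℚ_[p])‖ = 1 := by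
    have hle : ‖((2 : ℤ) : ℚ_[p])‖ ≤ 1 := Padic.norm_int_le_one 2
    have hlt : ¬ ‖((2 : ℤ) : ℚ_[p])‖ < 1 := by
      rw [Padic.norm_intCast_lt_one_iff]
      intro hdvd
      have := Int.le_of_dvd (by norm_num) hdvd
      omega
    have : ‖((2 : ℤ) : ℚ_[p])‖ = 1 := le_antisymm hle (not_lt.mp hlt)
    simpa using this
  have key : ∀ z : ℚ_[p], ‖z - 1‖ ≤ (p : ℝ)⁻¹ → ‖c + z‖ = 1 := by
    intro z hz
    have hzlt : ‖z - 1‖ < 1 := lt_of_le_of_lt hz hinv1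
    have hz1 : ‖z + 1‖ = 1 := by
      have he : z + 1 = 2 + (z - 1) := by ring
      rw [he, Padic.add_eq_max_of_ne (by rw [h2]; exact hzlt.ne'), h2,
        max_eq_left hzlt.le]
    have hclt : ‖c - 1‖ < 1 := lt_of_le_of_lt hc1 hinv1
    have he : c + z = (z + 1) + (c - 1) := by ring
    rw [he, Padic.add_eq_max_of_ne (by rw [hz1]; exact hclt.ne'), hz1,
      max_eq_left hclt.le]
  have hcx := key x hx2
  have hcy := key y hy2
  refine ⟨hcx, hcy, ?_⟩
  have hx0 : c + x ≠ 0 := by intro h; rw [h, norm_zero] at hcx; norm_num at hcx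
  have hy0 : c + y ≠ 0 := by intro h; rw [h, norm_zero] at hcy; norm_num at hcy
  have heq : f x - f y = (a * c - b) * (x - y) / ((c + x) * (c + y)) := by
    rw [hf, hf]; field_simp; ring
  have hacb : ‖a * c - b‖ ≤ (p : ℝ)⁻¹ := by
    have hrw : a * c - b = (a - 1) * (c - 1) + ((a - 1) + ((c - 1) - (b - 1))) := by ring
    rw [hrw]
    refine le_trans (Padic.nonarchimedean _ _) (max_le ?_ ?_)
    · rw [norm_mul]
      calc ‖a - 1‖ * ‖c - 1‖ ≤ (p : ℝ)⁻¹ * 1 :=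
            mul_le_mul ha1 (hc1.trans hinv1.le) (norm_nonneg _) hinv0
        _ = (p : ℝ)⁻¹ := mul_one _
    · refine le_trans (Padic.nonarchimedean _ _) (max_le ha1 ?_)
      rw [sub_eq_add_neg]
      refine le_trans (Padic.nonarchimedean _ _) (max_le hc1 ?_)
      rwa [norm_neg]
  rw [heq, norm_div, norm_mul, norm_mul, hcx, hcy, mul_one, div_one]
  exact mul_le_mul_of_nonneg_right hacb (norm_nonneg _)
end

section
/- Let p ≥ 3 be prime, α, β, γ ∈ Q_p with |α|_p, |β|_p, |γ|_p ≤ 1/p, a = exp_p(α), b = exp_p(β), c = exp_p(γ), and F(x) = ((a x + b)/(c + x))^2. Then F maps the set D = {z ∈ Q_p : |z|_p = 1, |z − 1|_p ≤ 1/p} into itself and satisfies |F(x) − F(y)|_p ≤ (1/p)|x − y|_p for all x, y ∈ D; consequently F has a unique fixed point in D. -/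
lemma padic_norm_factorial' (p : ℕ) [Fact p.Prime] (n : ℕ) :
    ‖((n.factorial : ℚ_[p]))‖ = (p:ℝ)^(-(padicValNat p n.factorial : ℤ)) := by
  rw [show ((n.factorial : ℚ_[p])) = (((n.factorial : ℚ):ℚ_[p])) by push_cast; ring,
    Padic.eq_padicNorm]
  rw [padicNorm.eq_zpow_of_nonzero (by exact_mod_cast n.factorial_ne_zero)]
  push_cast
  rw [padicValRat.of_nat]

lemma val_fact_le' (p : ℕ) [Fact p.Prime] (hp : 3 ≤ p) (n : ℕ) (hn : 1 ≤ n) :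
    2 * padicValNat p n.factorial + 1 ≤ n := by
  have h1 := sub_one_mul_padicValNat_factorial (p := p) n
  have hs1 : 1 ≤ (p.digits n).sum := by
    have hne : p.digits n ≠ [] := Nat.digits_ne_nil_iff_ne_zero.mpr (by omega)
    have hlast := Nat.getLast_digit_ne_zero p (show n ≠ 0 by omega)
    have hmem := List.getLast_mem hne
    have := List.single_le_sum (l := p.digits n) (fun x _ => Nat.zero_le x) _ hmem
    omega
  have hs2 : (p.digits n).sum ≤ n := Nat.digit_sum_le p n
  have h3 : 2 * padicValNat p n.factorial ≤ (p-1) * padicValNat p n.factorial :=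
    Nat.mul_le_mul_right _ (by omega)
  omega

lemma exp_term_norm' (p : ℕ) [Fact p.Prime] (hp : 3 ≤ p) {α : ℚ_[p]} (hα : ‖α‖ ≤ (p : ℝ)⁻¹)
    (n : ℕ) : ‖(n.factorial : ℚ_[p])⁻¹ • α ^ n‖ ≤ ((p:ℝ)⁻¹) ^ ((n+1)/2) := by
  have hp1 : (1:ℝ) < (p:ℝ) := by exact_mod_cast (by omega : 1 < p)
  have hp0 : (0:ℝ) < (p:ℝ) := by linarith
  rcases Nat.eq_zero_or_pos n with rfl | hn
  · simp
  have hv := val_fact_le' p hp n hn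
  set v := padicValNat p n.factorial with hvdef
  have hns : ‖(n.factorial : ℚ_[p])⁻¹ • α ^ n‖ = ‖(n.factorial : ℚ_[p])‖⁻¹ * ‖α‖^n := by
    rw [norm_smul, norm_inv, norm_pow]
  rw [hns, padic_norm_factorial']
  have hαn : ‖α‖^n ≤ ((p:ℝ)⁻¹)^n := pow_le_pow_left₀ (norm_nonneg _) hα n
  have h2 : ((p:ℝ)^(-(v:ℤ)))⁻¹ * ((p:ℝ)⁻¹)^n = (p:ℝ)^((v:ℤ) - n) := by
    rw [← zpow_neg, neg_neg, ← zpow_natCast, inv_zpow, ← zpow_neg, ← zpow_add₀ (by positivity)]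
    rw [sub_eq_add_neg]
  calc ((p:ℝ)^(-(v:ℤ)))⁻¹ * ‖α‖^n ≤ ((p:ℝ)^(-(v:ℤ)))⁻¹ * ((p:ℝ)⁻¹)^n := by
        apply mul_le_mul_of_nonneg_left hαn (by positivity)
    _ = (p:ℝ)^((v:ℤ) - n) := h2
    _ ≤ (p:ℝ)^(-(((n+1)/2 : ℕ) : ℤ)) := by
        apply zpow_le_zpow_right₀ hp1.le
        have : ((n+1)/2 : ℕ) + v ≤ n := by omega
        push_cast at this ⊢
        omega
    _ = ((p:ℝ)⁻¹) ^ ((n+1)/2) := by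
        rw [zpow_neg, ← zpow_natCast, ← inv_zpow, zpow_natCast]

lemma exp_sub_one_norm' (p : ℕ) [Fact p.Prime] (hp : 3 ≤ p) {α : ℚ_[p]}
    (hα : ‖α‖ ≤ (p : ℝ)⁻¹) : ‖pexp p α - 1‖ ≤ (p:ℝ)⁻¹ := by
  have hp1 : (1:ℝ) < (p:ℝ) := by exact_mod_cast (by omega : 1 < p)
  have hpinv1 : (p:ℝ)⁻¹ < 1 := by rw [inv_lt_one_iff₀]; right; exact hp1
  have hpinv0 : (0:ℝ) ≤ (p:ℝ)⁻¹ := by positivity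
  set f : ℕ → ℚ_[p] := fun n => (n.factorial : ℚ_[p])⁻¹ • α ^ n with hf
  have hbound := exp_term_norm' p hp hα
  have hsum : Summable f := by
    apply NonarchimedeanAddGroup.summable_of_tendsto_cofinite_zero
    rw [Nat.cofinite_eq_atTop, tendsto_zero_iff_norm_tendsto_zero]
    apply squeeze_zero (fun n => norm_nonneg _) hbound
    have h1 : Filter.Tendsto (fun k : ℕ => ((p:ℝ)⁻¹)^k) Filter.atTop (nhds 0) :=
      tendsto_pow_atTop_nhds_zero_of_lt_one hpinv0 hpinv1
    have h2 : Filter.Tendsto (fun n : ℕ => (n+1)/2) Filter.atTop Filter.atTop :=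
      Filter.tendsto_atTop_atTop.2 fun b => ⟨2*b, fun n hn => by omega⟩
    exact h1.comp h2
  have hexp : pexp p α = f 0 + ∑' n, f (n+1) := by
    rw [pexp, NormedSpace.exp_eq_tsum ℚ_[p]]; exact hsum.tsum_eq_zero_add
  have hf0 : f 0 = 1 := by simp [hf]
  rw [hexp, hf0, add_sub_cancel_left]
  apply IsUltrametricDist.norm_tsum_le_of_forall_le_of_nonneg hpinv0
  intro n
  calc ‖f (n+1)‖ ≤ ((p:ℝ)⁻¹)^((n+2)/2) := hbound (n+1)
    _ ≤ ((p:ℝ)⁻¹)^1 := pow_le_pow_of_le_one hpinv0 hpinv1.le (by omega)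
    _ = (p:ℝ)⁻¹ := pow_one _

/-- norm of `u + w` where `‖w‖ < ‖u‖`. -/
lemma norm_add_small' {p : ℕ} [Fact p.Prime] {u w : ℚ_[p]} {r : ℝ} (hu : ‖u‖ = r)
    (hw : ‖w‖ < r) : ‖u + w‖ = r := by
  rw [Padic.add_eq_max_of_ne (by rw [hu]; exact (ne_of_lt hw).symm), hu,
    max_eq_left (hu ▸ hw.le)]

lemma norm_two_pow_padic {p : ℕ} [Fact p.Prime] (hp : 3 ≤ p) (k : ℕ) :
    ‖(((2:ℕ)^k : ℕ) : ℚ_[p])‖ = 1 := by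
  have hple := Padic.norm_int_le_one (p := p) ((2:ℕ)^k : ℕ)
  rcases lt_or_eq_of_le hple with h | h
  · exfalso
    rw [Padic.norm_intCast_lt_one_iff] at h
    rw [Int.natCast_dvd_natCast] at h
    have := (Fact.out : p.Prime).dvd_of_dvd_pow h
    have := Nat.le_of_dvd (by norm_num) this
    omega
  · rw [← h]; norm_cast

theorem stmt8 (p : ℕ) [Fact p.Prime] (hp : 3 ≤ p) (α β γ : ℚ_[p])
    (hα : ‖α‖ ≤ (p : ℝ)⁻¹) (hβ : ‖β‖ ≤ (p : ℝ)⁻¹) (hγ : ‖γ‖ ≤ (p : ℝ)⁻¹)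
    (a b c : ℚ_[p]) (ha : a = pexp p α) (hb : b = pexp p β) (hc : c = pexp p γ)
    (F : ℚ_[p] → ℚ_[p]) (hF : ∀ x, F x = ((a * x + b) / (c + x)) ^ 2)
    (D : Set ℚ_[p]) (hD : D = {z : ℚ_[p] | ‖z‖ = 1 ∧ ‖z - 1‖ ≤ (p : ℝ)⁻¹}) :
    (Set.MapsTo F D D) ∧
    (∀ x ∈ D, ∀ y ∈ D, ‖F x - F y‖ ≤ (p : ℝ)⁻¹ * ‖x - y‖) ∧
    (∃! u, u ∈ D ∧ F u = u) := by
  have hp1 : (1:ℝ) < (p:ℝ) := by exact_mod_cast (by omega : 1 < p)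
  have hq1 : (p:ℝ)⁻¹ < 1 := by rw [inv_lt_one_iff₀]; right; exact hp1
  have hq0 : (0:ℝ) ≤ (p:ℝ)⁻¹ := by positivity
  set q : ℝ := (p:ℝ)⁻¹ with hqdef
  -- basic norms
  have h2n : ‖(2:ℚ_[p])‖ = 1 := by
    have := norm_two_pow_padic (p := p) hp 1; norm_num at this; exact_mod_cast this
  have h4n : ‖(4:ℚ_[p])‖ = 1 := by
    have := norm_two_pow_padic (p := p) hp 2; norm_num at this
    rw [show ((4:ℚ_[p])) = ((4:ℕ):ℚ_[p]) by norm_cast]; exact_mod_cast this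
  have h8n : ‖(8:ℚ_[p])‖ = 1 := by
    have := norm_two_pow_padic (p := p) hp 3; norm_num at this
    rw [show ((8:ℚ_[p])) = ((8:ℕ):ℚ_[p]) by norm_cast]; exact_mod_cast this
  have ha1 : ‖a - 1‖ ≤ q := ha ▸ exp_sub_one_norm' p hp hα
  have hb1 : ‖b - 1‖ ≤ q := hb ▸ exp_sub_one_norm' p hp hβ
  have hc1 : ‖c - 1‖ ≤ q := hc ▸ exp_sub_one_norm' p hp hγ
  have han : ‖a‖ = 1 := by
    have := norm_add_small' (p := p) (u := (1:ℚ_[p])) (w := a - 1) norm_one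
      (lt_of_le_of_lt ha1 hq1)
    simpa using this
  have hmax : ∀ u w : ℚ_[p], ‖u‖ ≤ q → ‖w‖ ≤ q → ‖u + w‖ ≤ q := fun u w hu hw =>
    le_trans (Padic.nonarchimedean u w) (max_le hu hw)
  -- for x ∈ D
  have hDmem : ∀ x, x ∈ D → ‖x‖ = 1 ∧ ‖x - 1‖ ≤ q := by
    intro x hx; rw [hD] at hx; exact hx
  have key : ∀ x, x ∈ D → ‖a*x + b - 2‖ ≤ q ∧ ‖c + x - 2‖ ≤ q ∧ ‖a*x+b‖ = 1 ∧ ‖c+x‖ = 1 := by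
    intro x hx
    obtain ⟨hx1, hx2⟩ := hDmem x hx
    have e1 : a*x + b - 2 = (a-1)*x + (x-1) + (b-1) := by ring
    have e2 : c + x - 2 = (c-1) + (x-1) := by ring
    have hax : ‖(a-1)*x‖ ≤ q := by rw [norm_mul, hx1, mul_one]; exact ha1
    have h1 : ‖a*x + b - 2‖ ≤ q := by rw [e1]; exact hmax _ _ (hmax _ _ hax hx2) hb1
    have h2 : ‖c + x - 2‖ ≤ q := by rw [e2]; exact hmax _ _ hc1 hx2
    refine ⟨h1, h2, ?_, ?_⟩
    · have := norm_add_small' (p := p) h2n (lt_of_le_of_lt h1 hq1)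
      rw [show (2:ℚ_[p]) + (a*x + b - 2) = a*x+b by ring] at this; exact this
    · have := norm_add_small' (p := p) h2n (lt_of_le_of_lt h2 hq1)
      rw [show (2:ℚ_[p]) + (c + x - 2) = c+x by ring] at this; exact this
  have hmaps : Set.MapsTo F D D := by
    intro x hx
    obtain ⟨h1, h2, h3, h4⟩ := key x hx
    have hcx0 : c + x ≠ 0 := by intro h; rw [h] at h4; simp at h4
    have hFn : ‖F x‖ = 1 := by
      rw [hF, norm_pow, norm_div, h3, h4]; norm_num
    have hid : F x - 1 = ((a*x+b - (c+x)) * ((a*x+b) + (c+x))) / (c+x)^2 := by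
      rw [hF]; field_simp; ring
    have hP : ‖a*x+b - (c+x)‖ ≤ q := by
      rw [show a*x+b - (c+x) = (a*x+b-2) + (-(c+x-2)) by ring]
      exact hmax _ _ h1 (by rw [norm_neg]; exact h2)
    have hQ : ‖(a*x+b) + (c+x)‖ = 1 := by
      have := norm_add_small' (p := p) h4n
        (lt_of_le_of_lt (hmax _ _ h1 h2) hq1)
      rw [show (4:ℚ_[p]) + ((a*x+b-2) + (c+x-2)) = (a*x+b) + (c+x) by ring] at this
      exact this
    have hF1 : ‖F x - 1‖ ≤ q := by
      rw [hid, norm_div, norm_mul, norm_pow, h4, hQ]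
      simpa using hP
    rw [hD]; exact ⟨hFn, hF1⟩
  have hacb : ‖a*c - b‖ ≤ q := by
    rw [show a*c - b = a*(c-1) + (a-1) + (-(b-1)) by ring]
    refine hmax _ _ (hmax _ _ ?_ ha1) (by rw [norm_neg]; exact hb1)
    rw [norm_mul, han, one_mul]; exact hc1
  have hlip : ∀ x ∈ D, ∀ y ∈ D, ‖F x - F y‖ ≤ q * ‖x - y‖ := by
    intro x hx y hy
    obtain ⟨hx1, hx2, hx3, hx4⟩ := key x hx
    obtain ⟨hy1, hy2, hy3, hy4⟩ := key y hy
    have hcx0 : c + x ≠ 0 := by intro h; rw [h] at hx4; simp at hx4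
    have hcy0 : c + y ≠ 0 := by intro h; rw [h] at hy4; simp at hy4
    have hid : F x - F y = ((a*c - b) * (x - y)) *
        ((a*x+b)*(c+y) + (a*y+b)*(c+x)) / ((c+x)^2 * (c+y)^2) := by
      rw [hF, hF]; field_simp; ring
    have hS1 : ‖(a*x+b)*(c+y) - 4‖ ≤ q := by
      rw [show (a*x+b)*(c+y) - 4 = (a*x+b-2)*(c+y) + 2*(c+y-2) by ring]
      refine hmax _ _ ?_ ?_
      · rw [norm_mul, hy4, mul_one]; exact hx1
      · rw [norm_mul, h2n, one_mul]; exact hy2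
    have hS2 : ‖(a*y+b)*(c+x) - 4‖ ≤ q := by
      rw [show (a*y+b)*(c+x) - 4 = (a*y+b-2)*(c+x) + 2*(c+x-2) by ring]
      refine hmax _ _ ?_ ?_
      · rw [norm_mul, hx4, mul_one]; exact hy1
      · rw [norm_mul, h2n, one_mul]; exact hx2
    have hS : ‖(a*x+b)*(c+y) + (a*y+b)*(c+x)‖ = 1 := by
      have := norm_add_small' (p := p) h8n
        (lt_of_le_of_lt (hmax _ _ hS1 hS2) hq1)
      rw [show (8:ℚ_[p]) + (((a*x+b)*(c+y) - 4) + ((a*y+b)*(c+x) - 4))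
        = (a*x+b)*(c+y) + (a*y+b)*(c+x) by ring] at this
      exact this
    rw [hid, norm_div, norm_mul, norm_mul, hS, norm_mul, norm_pow, norm_pow, hx4, hy4]
    simp only [one_pow, mul_one, one_mul, div_one]
    exact mul_le_mul_of_nonneg_right hacb (norm_nonneg _)
  refine ⟨hmaps, hlip, ?_⟩
  -- Banach fixed point
  have h1D : (1:ℚ_[p]) ∈ D := by rw [hD]; constructor <;> simp [hq0]
  have hDc : IsComplete D := by
    have : IsClosed D := by
      rw [hD, show {z : ℚ_[p] | ‖z‖ = 1 ∧ ‖z - 1‖ ≤ (p : ℝ)⁻¹}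
        = {z : ℚ_[p] | ‖z‖ = 1} ∩ {z : ℚ_[p] | ‖z - 1‖ ≤ (p : ℝ)⁻¹} from rfl]
      exact (isClosed_eq continuous_norm continuous_const).inter
        (isClosed_le (by fun_prop) continuous_const)
    exact this.isComplete
  set K : NNReal := ⟨q, hq0⟩ with hK
  have hcontr : ContractingWith K (hmaps.restrict F D D) := by
    constructor
    · rw [← NNReal.coe_lt_coe]; exact hq1
    · apply LipschitzWith.of_dist_le_mul
      rintro ⟨x, hx⟩ ⟨y, hy⟩
      rw [Subtype.dist_eq, Subtype.dist_eq, Set.MapsTo.val_restrict_apply,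
        Set.MapsTo.val_restrict_apply, dist_eq_norm, dist_eq_norm]
      exact hlip x hx y hy
    -- K coercion
  obtain ⟨u, huD, huf, -, -⟩ := hcontr.exists_fixedPoint' hDc hmaps h1D (edist_ne_top _ _)
  refine ⟨u, ⟨huD, huf⟩, ?_⟩
  rintro v ⟨hvD, hvf⟩
  by_contra hne
  have h := hlip v hvD u huD
  rw [hvf, huf] at h
  have hvu : (0:ℝ) < ‖v - u‖ := norm_pos_iff.mpr (sub_ne_zero_of_ne hne)
  nlinarith
end

section
/- Let p ≥ 3 be prime and suppose for each k ∈ N we are given α_k, β_k, γ_k ∈ Q_p with |α_k|_p, |β_k|_p, |γ_k|_p ≤ 1/p; set a_k = exp_p(α_k), b_k = exp_p(β_k), c_k = exp_p(γ_k), f_k(x) = (a_k x + b_k)/(c_k + x). If two sequences (u_n) and (v_n) in the set D = {z : |z|_p = 1, |z − 1|_p ≤ 1/p} both satisfy the recursion u_n = f_{n+1}(u_{n+1}) · f_{n+2}(u_{n+2}) for all n ∈ N, then |u_n − v_n|_p ≤ (1/p) · max{|u_{n+1} − v_{n+1}|_p, |u_{n+2} − v_{n+2}|_p} for all n. -/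
open IsUltrametricDist

variable {p : ℕ} [Fact p.Prime]

lemma valfact_le (n : ℕ) (hn : 1 ≤ n) : padicValNat p (n.factorial) ≤ n - 1 := by
  have hleg := sub_one_mul_padicValNat_factorial (p := p) n
  have hp2 : 2 ≤ p := (Fact.out : p.Prime).two_le
  have hs : 1 ≤ (p.digits n).sum := by
    have hne : p.digits n ≠ [] := Nat.digits_ne_nil_iff_ne_zero.mpr (by omega)
    have hlast := Nat.getLast_digit_ne_zero p (show n ≠ 0 by omega)
    have hmem := List.getLast_mem hne
    have := List.single_le_sum (fun x _ => Nat.zero_le x) _ hmem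
    omega
  have h1 : padicValNat p (n.factorial) ≤ (p - 1) * padicValNat p (n.factorial) :=
    Nat.le_mul_of_pos_left _ (by omega)
  omega

lemma norm_fact_eq (n : ℕ) :
    ‖((n.factorial : ℕ) : ℚ_[p])‖ = (p : ℝ) ^ (-(padicValNat p (n.factorial) : ℤ)) := by
  rw [Padic.norm_eq_zpow_neg_valuation (by exact_mod_cast n.factorial_ne_zero), Padic.valuation_natCast]

lemma term_norm_le {x : ℚ_[p]} (hx : ‖x‖ ≤ (p : ℝ)⁻¹) (n : ℕ) (hn : 1 ≤ n) :
    ‖x ^ n / (n.factorial : ℚ_[p])‖ ≤ (p : ℝ)⁻¹ := by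
  have hp1 : (1 : ℝ) < p := by exact_mod_cast (Fact.out : p.Prime).one_lt
  have hv := valfact_le (p := p) n hn
  rw [norm_div, norm_pow, norm_fact_eq]
  have hx' : ‖x‖ ^ n ≤ ((p : ℝ) ^ (-1 : ℤ)) ^ n := by
    apply pow_le_pow_left₀ (norm_nonneg x)
    simpa using hx
  calc ‖x‖ ^ n / (p : ℝ) ^ (-(padicValNat p (n.factorial) : ℤ))
      ≤ ((p : ℝ) ^ (-1 : ℤ)) ^ n / (p : ℝ) ^ (-(padicValNat p (n.factorial) : ℤ)) := by
        apply div_le_div_of_nonneg_right hx' -- maybe wrong name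
        positivity
    _ = (p : ℝ) ^ ((-1 : ℤ) * n + (padicValNat p (n.factorial) : ℤ)) := by
        rw [← zpow_natCast ((p:ℝ) ^ (-1:ℤ)), ← zpow_mul, ← zpow_sub₀ (by positivity), sub_neg_eq_add]
    _ ≤ (p : ℝ) ^ (-1 : ℤ) := by
        apply zpow_le_zpow_right₀ hp1.le
        omega
    _ = (p : ℝ)⁻¹ := by simp

lemma exp_sub_one_norm_le (hp : 3 ≤ p) {x : ℚ_[p]} (hx : ‖x‖ ≤ (p : ℝ)⁻¹) :
    ‖pexp p x - 1‖ ≤ (p : ℝ)⁻¹ := by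
  have hp1 : (1 : ℝ) < p := by exact_mod_cast (Fact.out : p.Prime).one_lt
  set g : ℕ → ℚ_[p] := fun n => x ^ n / (n.factorial : ℚ_[p]) with hg
  -- summability via geometric bound
  have key : ∀ n, ‖g n‖ ≤ (Real.sqrt (p : ℝ))⁻¹ ^ n := by
    intro n
    rcases Nat.eq_zero_or_pos n with rfl | hn
    · simp [hg]
    · have hsq : ‖g n‖ ^ 2 ≤ ((Real.sqrt (p : ℝ))⁻¹ ^ n) ^ 2 := by
        have hv := valfact_le (p := p) n hn
        have h2v : 2 * padicValNat p (n.factorial) ≤ n - 1 := by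
          have hleg := sub_one_mul_padicValNat_factorial (p := p) n
          have hs : 1 ≤ (p.digits n).sum := by
            have hne : p.digits n ≠ [] := Nat.digits_ne_nil_iff_ne_zero.mpr (by omega)
            have hlast := Nat.getLast_digit_ne_zero p (show n ≠ 0 by omega)
            have hmem := List.getLast_mem hne
            have := List.single_le_sum (fun x _ => Nat.zero_le x) _ hmem
            omega
          have : 2 * padicValNat p (n.factorial) ≤ (p-1) * padicValNat p (n.factorial) :=
            Nat.mul_le_mul_right _ (by omega)
          omega
        have hgn : ‖g n‖ ≤ (p : ℝ) ^ ((padicValNat p (n.factorial) : ℤ) - n) := by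
          rw [hg, norm_div, norm_pow, norm_fact_eq]
          have hx' : ‖x‖ ^ n ≤ ((p : ℝ) ^ (-1 : ℤ)) ^ n :=
            pow_le_pow_left₀ (norm_nonneg x) (by simpa using hx) n
          calc ‖x‖ ^ n / (p : ℝ) ^ (-(padicValNat p (n.factorial) : ℤ))
              ≤ ((p : ℝ) ^ (-1 : ℤ)) ^ n / (p : ℝ) ^ (-(padicValNat p (n.factorial) : ℤ)) := by
                gcongr
            _ = (p : ℝ) ^ ((padicValNat p (n.factorial) : ℤ) - n) := by
                rw [← zpow_natCast ((p:ℝ) ^ (-1:ℤ)), ← zpow_mul, ← zpow_sub₀ (by positivity)]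
                ring_nf
        calc ‖g n‖ ^ 2 ≤ ((p : ℝ) ^ ((padicValNat p (n.factorial) : ℤ) - n)) ^ 2 := by
              apply pow_le_pow_left₀ (norm_nonneg _) hgn
          _ = (p : ℝ) ^ (((padicValNat p (n.factorial) : ℤ) - n) * 2) := by
              rw [← zpow_natCast ((p:ℝ) ^ _), ← zpow_mul]; norm_num
          _ ≤ (p : ℝ) ^ (-(n : ℤ)) := by
              apply zpow_le_zpow_right₀ hp1.le
              omega
          _ = ((Real.sqrt (p : ℝ))⁻¹ ^ n) ^ 2 := by
              rw [← pow_mul, mul_comm n 2, pow_mul, inv_pow ((Real.sqrt (p:ℝ))) 2,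
                Real.sq_sqrt (by positivity : (0:ℝ) ≤ (p:ℝ)), inv_pow, ← zpow_natCast (p:ℝ),
                ← zpow_neg]
      have h0 : (0:ℝ) ≤ (Real.sqrt (p : ℝ))⁻¹ ^ n := by positivity
      nlinarith [norm_nonneg (g n), sq_nonneg (‖g n‖ - (Real.sqrt (p : ℝ))⁻¹ ^ n)]
  have hsummable : Summable g := by
    apply Summable.of_norm_bounded (summable_geometric_of_lt_one (by positivity) ?_) key
    rw [inv_lt_one_iff₀]
    right
    rw [show (1:ℝ) = Real.sqrt 1 by simp]
    exact Real.sqrt_lt_sqrt (by norm_num) hp1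
  have hexp : pexp p x = ∑' n, g n := by
    rw [pexp, NormedSpace.exp_eq_tsum_div]
  have hsplit : pexp p x = g 0 + ∑' n, g (n + 1) := by
    rw [hexp, hsummable.tsum_eq_zero_add]
  have hg0 : g 0 = 1 := by simp [hg]
  rw [hsplit, hg0, add_sub_cancel_left]
  apply IsUltrametricDist.norm_tsum_le_of_forall_le_of_nonneg (by positivity)
  intro n
  exact term_norm_le hx (n + 1) (by omega)

lemma norm_two_eq_one (hp : 3 ≤ p) : ‖(2 : ℚ_[p])‖ = 1 := by
  have hle : ‖((2 : ℤ) : ℚ_[p])‖ ≤ 1 := Padic.norm_int_le_one 2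
  have hnd : ¬ ((p : ℤ) ∣ 2) := by
    intro h
    have := Int.le_of_dvd (by norm_num) h
    omega
  have hlt := (Padic.norm_intCast_lt_one_iff (k := (2 : ℤ))).not.mpr hnd
  push_neg at hlt
  have : ((2 : ℤ) : ℚ_[p]) = (2 : ℚ_[p]) := by norm_cast
  rw [this] at hle hlt
  linarith

lemma norm_eq_one_of_sub_lt {z : ℚ_[p]} (h : ‖z - 1‖ < 1) : ‖z‖ = 1 := by
  have h1 : ‖(1 : ℚ_[p])‖ = 1 := norm_one
  have hne : ‖z - 1‖ ≠ ‖(1 : ℚ_[p])‖ := by rw [h1]; exact h.ne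
  calc ‖z‖ = ‖(z - 1) + 1‖ := by ring_nf
    _ = max ‖z - 1‖ ‖(1 : ℚ_[p])‖ := IsUltrametricDist.norm_add_eq_max_of_norm_ne_norm hne
    _ = 1 := by rw [h1, max_eq_right h.le]

theorem stmt9 (p : ℕ) [Fact p.Prime] (hp : 3 ≤ p) (α β γ : ℕ → ℚ_[p])
    (hα : ∀ k, ‖α k‖ ≤ (p : ℝ)⁻¹) (hβ : ∀ k, ‖β k‖ ≤ (p : ℝ)⁻¹) (hγ : ∀ k, ‖γ k‖ ≤ (p : ℝ)⁻¹)
    (a b c : ℕ → ℚ_[p]) (ha : ∀ k, a k = pexp p (α k)) (hb : ∀ k, b k = pexp p (β k))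
    (hc : ∀ k, c k = pexp p (γ k))
    (f : ℕ → ℚ_[p] → ℚ_[p]) (hf : ∀ k x, f k x = (a k * x + b k) / (c k + x))
    (u v : ℕ → ℚ_[p])
    (hu : ∀ n, ‖u n‖ = 1 ∧ ‖u n - 1‖ ≤ (p : ℝ)⁻¹)
    (hv : ∀ n, ‖v n‖ = 1 ∧ ‖v n - 1‖ ≤ (p : ℝ)⁻¹)
    (hru : ∀ n, u n = f (n + 1) (u (n + 1)) * f (n + 2) (u (n + 2)))
    (hrv : ∀ n, v n = f (n + 1) (v (n + 1)) * f (n + 2) (v (n + 2))) :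
    ∀ n, ‖u n - v n‖ ≤ (p : ℝ)⁻¹ * max ‖u (n + 1) - v (n + 1)‖ ‖u (n + 2) - v (n + 2)‖ := by
  set q : ℝ := (p : ℝ)⁻¹ with hqdef
  have hp1 : (1 : ℝ) < p := by exact_mod_cast (Fact.out : p.Prime).one_lt
  have hq1 : q < 1 := by rw [hqdef]; exact inv_lt_one_of_one_lt₀ hp1
  have hq0 : 0 ≤ q := by positivity
  have hA : ∀ k, ‖a k - 1‖ ≤ q := fun k => by rw [ha]; exact exp_sub_one_norm_le hp (hα k)
  have hB : ∀ k, ‖b k - 1‖ ≤ q := fun k => by rw [hb]; exact exp_sub_one_norm_le hp (hβ k)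
  have hC : ∀ k, ‖c k - 1‖ ≤ q := fun k => by rw [hc]; exact exp_sub_one_norm_le hp (hγ k)
  have haN : ∀ k, ‖a k‖ = 1 := fun k => norm_eq_one_of_sub_lt ((hA k).trans_lt hq1)
  -- denominator norm
  have hden : ∀ k (x : ℚ_[p]), ‖x - 1‖ ≤ q → ‖c k + x‖ = 1 := by
    intro k x hx
    have h2 : ‖(2 : ℚ_[p])‖ = 1 := norm_two_eq_one hp
    have hsub : ‖(c k + x) - 2‖ ≤ q := by
      have : (c k + x) - 2 = (c k - 1) + (x - 1) := by ring
      rw [this]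
      exact (IsUltrametricDist.norm_add_le_max _ _).trans (max_le (hC k) hx)
    have hne : ‖(c k + x) - 2‖ ≠ ‖(2 : ℚ_[p])‖ := by rw [h2]; exact (hsub.trans_lt hq1).ne
    calc ‖c k + x‖ = ‖((c k + x) - 2) + 2‖ := by ring_nf
      _ = max ‖(c k + x) - 2‖ ‖(2 : ℚ_[p])‖ :=
          IsUltrametricDist.norm_add_eq_max_of_norm_ne_norm hne
      _ = 1 := by rw [h2, max_eq_right (hsub.trans hq1.le)]
  -- numerator norm
  have hnum : ∀ k (x : ℚ_[p]), ‖x - 1‖ ≤ q → ‖a k * x + b k‖ = 1 := by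
    intro k x hx
    have h2 : ‖(2 : ℚ_[p])‖ = 1 := norm_two_eq_one hp
    have hsub : ‖(a k * x + b k) - 2‖ ≤ q := by
      have : (a k * x + b k) - 2 = a k * (x - 1) + ((a k - 1) + (b k - 1)) := by ring
      rw [this]
      refine (IsUltrametricDist.norm_add_le_max _ _).trans (max_le ?_ ?_)
      · rw [norm_mul, haN k, one_mul]; exact hx
      · exact (IsUltrametricDist.norm_add_le_max _ _).trans (max_le (hA k) (hB k))
    have hne : ‖(a k * x + b k) - 2‖ ≠ ‖(2 : ℚ_[p])‖ := by rw [h2]; exact (hsub.trans_lt hq1).ne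
    calc ‖a k * x + b k‖ = ‖((a k * x + b k) - 2) + 2‖ := by ring_nf
      _ = max ‖(a k * x + b k) - 2‖ ‖(2 : ℚ_[p])‖ :=
          IsUltrametricDist.norm_add_eq_max_of_norm_ne_norm hne
      _ = 1 := by rw [h2, max_eq_right (hsub.trans hq1.le)]
  -- value norm
  have hfval : ∀ k (x : ℚ_[p]), ‖x - 1‖ ≤ q → ‖f k x‖ = 1 := by
    intro k x hx
    rw [hf, norm_div, hnum k x hx, hden k x hx, div_one]
  -- contraction
  have hcontr : ∀ k (x y : ℚ_[p]), ‖x - 1‖ ≤ q → ‖y - 1‖ ≤ q →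
      ‖f k x - f k y‖ ≤ q * ‖x - y‖ := by
    intro k x y hx hy
    have hdx : ‖c k + x‖ = 1 := hden k x hx
    have hdy : ‖c k + y‖ = 1 := hden k y hy
    have hx0 : c k + x ≠ 0 := by intro h; rw [h, norm_zero] at hdx; norm_num at hdx
    have hy0 : c k + y ≠ 0 := by intro h; rw [h, norm_zero] at hdy; norm_num at hdy
    have heq : f k x - f k y = (a k * c k - b k) * (x - y) / ((c k + x) * (c k + y)) := by
      rw [hf, hf]
      field_simp
      ring
    have hacb : ‖a k * c k - b k‖ ≤ q := by
      have : a k * c k - b k = a k * (c k - 1) + ((a k - 1) + (1 - b k)) := by ring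
      rw [this]
      refine (IsUltrametricDist.norm_add_le_max _ _).trans (max_le ?_ ?_)
      · rw [norm_mul, haN k, one_mul]; exact hC k
      · refine (IsUltrametricDist.norm_add_le_max _ _).trans (max_le (hA k) ?_)
        rw [norm_sub_rev]; exact hB k
    rw [heq, norm_div, norm_mul, norm_mul, hdx, hdy]
    simp only [one_mul, div_one]
    exact mul_le_mul_of_nonneg_right hacb (norm_nonneg _)
  -- main step
  intro n
  set F1u := f (n + 1) (u (n + 1))
  set F2u := f (n + 2) (u (n + 2))
  set F1v := f (n + 1) (v (n + 1))
  set F2v := f (n + 2) (v (n + 2))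
  have hsplit : u n - v n = F1u * (F2u - F2v) + (F1u - F1v) * F2v := by
    rw [hru n, hrv n]; ring
  have h1 : ‖F1u * (F2u - F2v)‖ ≤ q * ‖u (n + 2) - v (n + 2)‖ := by
    rw [norm_mul, hfval (n + 1) (u (n + 1)) (hu (n + 1)).2, one_mul]
    exact hcontr (n + 2) _ _ (hu (n + 2)).2 (hv (n + 2)).2
  have h2 : ‖(F1u - F1v) * F2v‖ ≤ q * ‖u (n + 1) - v (n + 1)‖ := by
    rw [norm_mul, hfval (n + 2) (v (n + 2)) (hv (n + 2)).2, mul_one]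
    exact hcontr (n + 1) _ _ (hu (n + 1)).2 (hv (n + 1)).2
  rw [hsplit]
  refine (IsUltrametricDist.norm_add_le_max _ _).trans (max_le ?_ ?_)
  · exact h1.trans (mul_le_mul_of_nonneg_left (le_max_right _ _) hq0)
  · exact h2.trans (mul_le_mul_of_nonneg_left (le_max_left _ _) hq0)
end

section
/- Let p ≥ 3 be prime and suppose for each k ∈ N we are given α_k, β_k, γ_k ∈ Q_p with |α_k|_p, |β_k|_p, |γ_k|_p ≤ 1/p; set a_k = exp_p(α_k), b_k = exp_p(β_k), c_k = exp_p(γ_k), f_k(x) = (a_k x + b_k)/(c_k + x). If two sequences (u_n) and (v_n) in D = {z ∈ Q_p : |z|_p = 1, |z − 1|_p ≤ 1/p} both satisfy u_n = f_{n+1}(u_{n+1}) · f_{n+2}(u_{n+2}) for all n ∈ N, then u_n = v_n for all n. -/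
open Filter Topology in
private lemma exp_bound (p : ℕ) [Fact p.Prime] (hp : 3 ≤ p) (x : ℚ_[p])
    (hx : ‖x‖ ≤ (p : ℝ)⁻¹) : ‖pexp p x - 1‖ ≤ (p : ℝ)⁻¹ := by
  have hp1 : (1 : ℝ) < p := by
    have : (3 : ℝ) ≤ p := by exact_mod_cast hp
    linarith
  set t : ℕ → ℚ_[p] := fun n => (n.factorial : ℚ_[p])⁻¹ • x ^ n with ht
  have hval : ∀ n : ℕ, 1 ≤ n → 2 * padicValNat p n.factorial + 1 ≤ n := by
    intro n hn
    have hne : p.digits n ≠ [] := Nat.digits_ne_nil_iff_ne_zero.mpr (by omega)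
    have hlast := Nat.getLast_digit_ne_zero p (show n ≠ 0 by omega)
    have hmem : (p.digits n).getLast hne ∈ p.digits n := List.getLast_mem hne
    have hs : 1 ≤ (p.digits n).sum := by
      calc 1 ≤ (p.digits n).getLast hne := Nat.one_le_iff_ne_zero.mpr hlast
        _ ≤ (p.digits n).sum := List.single_le_sum (fun _ _ => Nat.zero_le _) _ hmem
    have hleg := sub_one_mul_padicValNat_factorial (p := p) n
    have hsn : (p.digits n).sum ≤ n := Nat.digit_sum_le p n
    have h2 : 2 * padicValNat p n.factorial ≤ (p - 1) * padicValNat p n.factorial :=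
      Nat.mul_le_mul_right _ (by omega)
    omega
  have key : ∀ n : ℕ, 1 ≤ n → ‖t n‖ ≤ ((p : ℝ)⁻¹) ^ ((n + 1) / 2) := by
    intro n hn
    have hfac : (n.factorial : ℚ_[p]) ≠ 0 := Nat.cast_ne_zero.mpr n.factorial_ne_zero
    have h1 : ‖(n.factorial : ℚ_[p])‖ = (p : ℝ) ^ (-(padicValNat p n.factorial : ℤ)) := by
      rw [Padic.norm_eq_zpow_neg_valuation hfac, Padic.valuation_natCast]
    have h2 : ‖t n‖ = (p : ℝ) ^ ((padicValNat p n.factorial : ℤ)) * ‖x‖ ^ n := by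
      rw [ht]
      simp only [norm_smul, norm_inv, h1, norm_pow, ← zpow_neg, neg_neg]
    have hxn : ‖x‖ ^ n ≤ (p : ℝ) ^ (-(n : ℤ)) := by
      calc ‖x‖ ^ n ≤ ((p : ℝ)⁻¹) ^ n := pow_le_pow_left₀ (norm_nonneg _) hx n
        _ = (p : ℝ) ^ (-(n : ℤ)) := by rw [← zpow_natCast ((p:ℝ)⁻¹) n, inv_zpow, ← zpow_neg]
    have h3 : ‖t n‖ ≤ (p : ℝ) ^ ((padicValNat p n.factorial : ℤ) - n) := by
      have hpne : (p : ℝ) ≠ 0 := by positivity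
      have hpos : (0 : ℝ) < (p : ℝ) ^ ((padicValNat p n.factorial : ℤ)) := by positivity
      calc ‖t n‖ = (p : ℝ) ^ ((padicValNat p n.factorial : ℤ)) * ‖x‖ ^ n := h2
        _ ≤ (p : ℝ) ^ ((padicValNat p n.factorial : ℤ)) * (p : ℝ) ^ (-(n : ℤ)) :=
            mul_le_mul_of_nonneg_left hxn hpos.le
        _ = (p : ℝ) ^ ((padicValNat p n.factorial : ℤ) - n) := by
            rw [← zpow_add₀ hpne, sub_eq_add_neg]
    refine h3.trans ?_
    have hexp : (padicValNat p n.factorial : ℤ) - n ≤ -(((n + 1) / 2 : ℕ) : ℤ) := by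
      have := hval n hn
      omega
    calc (p : ℝ) ^ ((padicValNat p n.factorial : ℤ) - n)
        ≤ (p : ℝ) ^ (-(((n + 1) / 2 : ℕ) : ℤ)) := zpow_le_zpow_right₀ hp1.le hexp
      _ = ((p : ℝ)⁻¹) ^ ((n + 1) / 2) := by rw [zpow_neg, ← zpow_natCast, ← inv_zpow, zpow_natCast]
  have hdiv : Tendsto (fun n : ℕ => (n + 1) / 2) atTop atTop :=
    tendsto_atTop_atTop.mpr fun b => ⟨2 * b, fun n hn => by omega⟩
  have hg : Tendsto (fun n : ℕ => ((p : ℝ)⁻¹) ^ ((n + 1) / 2)) atTop (𝓝 0) :=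
    (tendsto_pow_atTop_nhds_zero_of_lt_one (by positivity)
      (inv_lt_one_of_one_lt₀ hp1)).comp hdiv
  have ht0 : Tendsto t atTop (𝓝 0) :=
    squeeze_zero_norm' (eventually_atTop.mpr ⟨1, fun n hn => key n hn⟩) hg
  have hsum : Summable t :=
    NonarchimedeanAddGroup.summable_of_tendsto_cofinite_zero (by rwa [Nat.cofinite_eq_atTop])
  have hexp : pexp p x = ∑' n, t n := by
    rw [pexp, NormedSpace.exp_eq_tsum ℚ_[p]]
  have hsplit : pexp p x - 1 = ∑' n, t (n + 1) := by
    rw [hexp, hsum.tsum_eq_zero_add]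
    have : t 0 = 1 := by simp [ht]
    rw [this]; ring
  have hterm : ∀ n : ℕ, ‖t (n + 1)‖ ≤ (p : ℝ)⁻¹ := by
    intro n
    refine (key (n + 1) (by omega)).trans ?_
    have h01 : (0 : ℝ) ≤ (p : ℝ)⁻¹ := by positivity
    have h11 : (p : ℝ)⁻¹ ≤ 1 := by
      rw [inv_le_one_iff₀]; right; linarith
    calc ((p : ℝ)⁻¹) ^ ((n + 1 + 1) / 2) ≤ ((p : ℝ)⁻¹) ^ 1 :=
          pow_le_pow_of_le_one h01 h11 (by omega)
      _ = (p : ℝ)⁻¹ := pow_one _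
  rw [hsplit]
  exact IsUltrametricDist.norm_tsum_le_of_forall_le_of_nonneg (by positivity) hterm

theorem stmt10 (p : ℕ) [Fact p.Prime] (hp : 3 ≤ p) (α β γ : ℕ → ℚ_[p])
    (hα : ∀ k, ‖α k‖ ≤ (p : ℝ)⁻¹) (hβ : ∀ k, ‖β k‖ ≤ (p : ℝ)⁻¹) (hγ : ∀ k, ‖γ k‖ ≤ (p : ℝ)⁻¹)
    (a b c : ℕ → ℚ_[p]) (ha : ∀ k, a k = pexp p (α k)) (hb : ∀ k, b k = pexp p (β k))
    (hc : ∀ k, c k = pexp p (γ k))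
    (f : ℕ → ℚ_[p] → ℚ_[p]) (hf : ∀ k x, f k x = (a k * x + b k) / (c k + x))
    (u v : ℕ → ℚ_[p])
    (hu : ∀ n, ‖u n‖ = 1 ∧ ‖u n - 1‖ ≤ (p : ℝ)⁻¹)
    (hv : ∀ n, ‖v n‖ = 1 ∧ ‖v n - 1‖ ≤ (p : ℝ)⁻¹)
    (hru : ∀ n, u n = f (n + 1) (u (n + 1)) * f (n + 2) (u (n + 2)))
    (hrv : ∀ n, v n = f (n + 1) (v (n + 1)) * f (n + 2) (v (n + 2))) :
    ∀ n, u n = v n := by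
  have hp1 : (1 : ℝ) < p := by
    have : (3 : ℝ) ≤ p := by exact_mod_cast hp
    linarith
  set P : ℝ := (p : ℝ)⁻¹ with hP
  have hP0 : 0 < P := by positivity
  have hP1 : P < 1 := inv_lt_one_of_one_lt₀ hp1
  -- basic bounds on a, b, c
  have hA : ∀ k, ‖a k - 1‖ ≤ P := fun k => (ha k) ▸ exp_bound p hp _ (hα k)
  have hB : ∀ k, ‖b k - 1‖ ≤ P := fun k => (hb k) ▸ exp_bound p hp _ (hβ k)
  have hC : ∀ k, ‖c k - 1‖ ≤ P := fun k => (hc k) ▸ exp_bound p hp _ (hγ k)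
  have hnorm1 : ∀ z : ℚ_[p], ‖z - 1‖ ≤ P → ‖z‖ ≤ 1 := by
    intro z hz
    have : z = 1 + (z - 1) := by ring
    rw [this]
    refine (Padic.nonarchimedean _ _).trans ?_
    simp only [norm_one, max_le_iff]
    exact ⟨le_refl 1, hz.trans hP1.le⟩
  -- ‖2‖ = 1
  have h2norm : ‖(2 : ℚ_[p])‖ = 1 := by
    have hle : ‖(2 : ℚ_[p])‖ ≤ 1 := by
      have := Padic.norm_int_le_one (p := p) 2
      simpa using this
    have hnlt : ¬ ‖(2 : ℚ_[p])‖ < 1 := by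
      intro h
      have : ((p : ℤ)) ∣ 2 := by
        have := (Padic.norm_intCast_lt_one_iff (p := p) (k := 2)).mp (by simpa using h)
        exact this
      have := Int.le_of_dvd (by norm_num) this
      omega
    linarith [lt_or_eq_of_le hle |>.imp_left id]
  -- ‖c k + x‖ = 1 for x in D
  have hcx : ∀ k, ∀ x : ℚ_[p], ‖x - 1‖ ≤ P → ‖c k + x‖ = 1 := by
    intro k x hx
    have hrw : c k + x = 2 + ((c k - 1) + (x - 1)) := by ring
    have hsmall : ‖(c k - 1) + (x - 1)‖ ≤ P :=
      (Padic.nonarchimedean _ _).trans (max_le (hC k) hx)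
    have hne : ‖(2 : ℚ_[p])‖ ≠ ‖(c k - 1) + (x - 1)‖ := by
      rw [h2norm]
      intro h
      have := hsmall.trans_lt hP1
      rw [← h] at this
      exact absurd this (lt_irrefl _)
    rw [hrw, Padic.add_eq_max_of_ne hne, h2norm]
    exact max_eq_left (hsmall.trans hP1.le)
  have hcx_ne : ∀ k, ∀ x : ℚ_[p], ‖x - 1‖ ≤ P → c k + x ≠ 0 := by
    intro k x hx h
    have := hcx k x hx
    rw [h] at this
    simp at this
  -- ‖f k x‖ ≤ 1
  have hfnorm : ∀ k, ∀ x : ℚ_[p], ‖x - 1‖ ≤ P → ‖f k x‖ ≤ 1 := by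
    intro k x hx
    rw [hf, norm_div, hcx k x hx, div_one]
    refine (Padic.nonarchimedean _ _).trans (max_le ?_ ?_)
    · rw [norm_mul]
      exact mul_le_one₀ (hnorm1 _ (hA k)) (norm_nonneg _) (hnorm1 _ hx)
    · exact hnorm1 _ (hB k)
  -- ‖a k * c k - b k‖ ≤ P
  have hacb : ∀ k, ‖a k * c k - b k‖ ≤ P := by
    intro k
    have hrw : a k * c k - b k =
        ((a k - 1) * (c k - 1) + (a k - 1)) + ((c k - 1) + (-(b k - 1))) := by ring
    rw [hrw]
    refine (Padic.nonarchimedean _ _).trans (max_le ?_ ?_)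
    · refine (Padic.nonarchimedean _ _).trans (max_le ?_ (hA k))
      rw [norm_mul]
      calc ‖a k - 1‖ * ‖c k - 1‖ ≤ 1 * P := by
            refine mul_le_mul ((hA k).trans hP1.le) (hC k) (norm_nonneg _) zero_le_one
        _ = P := one_mul P
    · refine (Padic.nonarchimedean _ _).trans (max_le (hC k) ?_)
      rw [norm_neg]; exact hB k
  -- contraction
  have hcontr : ∀ k, ∀ x y : ℚ_[p], ‖x - 1‖ ≤ P → ‖y - 1‖ ≤ P →
      ‖f k x - f k y‖ ≤ P * ‖x - y‖ := by
    intro k x y hx hy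
    have hxne := hcx_ne k x hx
    have hyne := hcx_ne k y hy
    have hrw : f k x - f k y = ((a k * c k - b k) * (x - y)) / ((c k + x) * (c k + y)) := by
      rw [hf, hf]
      field_simp
      ring
    rw [hrw, norm_div, norm_mul, norm_mul, hcx k x hx, hcx k y hy, mul_one, div_one]
    exact mul_le_mul_of_nonneg_right (hacb k) (norm_nonneg _)
  -- the key step estimate
  have hstep : ∀ n, ‖u n - v n‖ ≤
      P * max ‖u (n + 1) - v (n + 1)‖ ‖u (n + 2) - v (n + 2)‖ := by
    intro n
    have hrw : u n - v n =
        f (n + 1) (u (n + 1)) * (f (n + 2) (u (n + 2)) - f (n + 2) (v (n + 2))) +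
        (f (n + 1) (u (n + 1)) - f (n + 1) (v (n + 1))) * f (n + 2) (v (n + 2)) := by
      rw [hru n, hrv n]; ring
    rw [hrw]
    refine (Padic.nonarchimedean _ _).trans (max_le ?_ ?_)
    · rw [norm_mul]
      calc ‖f (n + 1) (u (n + 1))‖ * ‖f (n + 2) (u (n + 2)) - f (n + 2) (v (n + 2))‖
          ≤ 1 * (P * ‖u (n + 2) - v (n + 2)‖) := by
            refine mul_le_mul (hfnorm _ _ (hu (n + 1)).2)
              (hcontr _ _ _ (hu (n + 2)).2 (hv (n + 2)).2) (norm_nonneg _) zero_le_one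
        _ = P * ‖u (n + 2) - v (n + 2)‖ := one_mul _
        _ ≤ P * max ‖u (n + 1) - v (n + 1)‖ ‖u (n + 2) - v (n + 2)‖ :=
            mul_le_mul_of_nonneg_left (le_max_right _ _) hP0.le
    · rw [norm_mul]
      calc ‖f (n + 1) (u (n + 1)) - f (n + 1) (v (n + 1))‖ * ‖f (n + 2) (v (n + 2))‖
          ≤ (P * ‖u (n + 1) - v (n + 1)‖) * 1 := by
            refine mul_le_mul (hcontr _ _ _ (hu (n + 1)).2 (hv (n + 1)).2)
              (hfnorm _ _ (hv (n + 2)).2) (norm_nonneg _) (by positivity)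
        _ = P * ‖u (n + 1) - v (n + 1)‖ := mul_one _
        _ ≤ P * max ‖u (n + 1) - v (n + 1)‖ ‖u (n + 2) - v (n + 2)‖ :=
            mul_le_mul_of_nonneg_left (le_max_left _ _) hP0.le
  -- induction
  have hind : ∀ m : ℕ, ∀ n, ‖u n - v n‖ ≤ P ^ m := by
    intro m
    induction m with
    | zero =>
      intro n
      rw [pow_zero]
      have hrw : u n - v n = (u n - 1) + (-(v n - 1)) := by ring
      rw [hrw]
      refine (Padic.nonarchimedean _ _).trans (max_le ?_ ?_)
      · exact (hu n).2.trans hP1.le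
      · rw [norm_neg]; exact (hv n).2.trans hP1.le
    | succ m ih =>
      intro n
      refine (hstep n).trans ?_
      rw [pow_succ, mul_comm (P ^ m) P]
      exact mul_le_mul_of_nonneg_left (max_le (ih (n + 1)) (ih (n + 2))) hP0.le
  intro n
  have hzero : ‖u n - v n‖ ≤ 0 := by
    refine ge_of_tendsto (tendsto_pow_atTop_nhds_zero_of_lt_one hP0.le hP1) ?_
    exact Filter.Eventually.of_forall fun m => hind m n
  have : u n - v n = 0 := by
    have := le_antisymm hzero (norm_nonneg _)
    exact norm_eq_zero.mp this
  exact sub_eq_zero.mp this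
end

section
/- Let p ≥ 3 be prime and for each k ∈ N let a_k, b_k, c_k ∈ Q_p satisfy |a_k − 1|_p ≤ 1/p, |b_k − 1|_p ≤ 1/p, |c_k − 1|_p ≤ 1/p, and additionally a_k + b_k = c_k + 1 for all k. Then the constant sequence u_n = 1 satisfies u_n = ((a_{n+1} u_{n+1} + b_{n+1})/(c_{n+1} + u_{n+1})) · ((a_{n+2} u_{n+2} + b_{n+2})/(c_{n+2} + u_{n+2})) for all n ∈ N, and it is the unique solution with values in D = {z : |z|_p = 1, |z − 1|_p ≤ 1/p}. -/
theorem stmt12 (p : ℕ) [Fact p.Prime] (hp : 3 ≤ p) (a b c : ℕ → ℚ_[p])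
    (ha : ∀ k, ‖a k - 1‖ ≤ (p : ℝ)⁻¹) (hb : ∀ k, ‖b k - 1‖ ≤ (p : ℝ)⁻¹)
    (hc : ∀ k, ‖c k - 1‖ ≤ (p : ℝ)⁻¹) (habc : ∀ k, a k + b k = c k + 1) :
    (∀ n : ℕ, (1 : ℚ_[p]) =
        ((a (n + 1) * 1 + b (n + 1)) / (c (n + 1) + 1)) *
        ((a (n + 2) * 1 + b (n + 2)) / (c (n + 2) + 1))) ∧
    (∀ u : ℕ → ℚ_[p], (∀ n, ‖u n‖ = 1 ∧ ‖u n - 1‖ ≤ (p : ℝ)⁻¹) →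
      (∀ n, u n = ((a (n + 1) * u (n + 1) + b (n + 1)) / (c (n + 1) + u (n + 1))) *
        ((a (n + 2) * u (n + 2) + b (n + 2)) / (c (n + 2) + u (n + 2)))) →
      ∀ n, u n = 1) := by
  have hp1R : (1 : ℝ) < (p : ℝ) := by exact_mod_cast lt_of_lt_of_le (by norm_num) hp
  have hp0 : (0 : ℝ) < (p : ℝ)⁻¹ := inv_pos.mpr (lt_trans one_pos hp1R)
  have hpinv1 : (p : ℝ)⁻¹ < 1 := inv_lt_one_of_one_lt₀ hp1R
  have hpinvle : (p : ℝ)⁻¹ ≤ 1 := le_of_lt hpinv1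
  -- ‖2‖ = 1
  have h2 : ‖(2 : ℚ_[p])‖ = 1 := by
    have h2z : ((2 : ℤ) : ℚ_[p]) = (2 : ℚ_[p]) := by push_cast; ring
    have hle : ‖((2 : ℤ) : ℚ_[p])‖ ≤ 1 := Padic.norm_int_le_one 2
    have hnd : ¬ ((p : ℤ) ∣ 2) := by
      intro h
      have := Int.le_of_dvd (by norm_num) h
      omega
    have hnlt : ¬ ‖((2 : ℤ) : ℚ_[p])‖ < 1 := by
      rw [Padic.norm_intCast_lt_one_iff]
      exact hnd
    rw [← h2z]
    exact le_antisymm hle (not_lt.mp hnlt)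
  -- denominator norm
  have hden : ∀ k (x : ℚ_[p]), ‖x - 1‖ ≤ (p : ℝ)⁻¹ → ‖c k + x‖ = 1 := by
    intro k x hx
    have hsum : ‖(c k - 1) + (x - 1)‖ ≤ (p : ℝ)⁻¹ :=
      le_trans (Padic.nonarchimedean _ _) (max_le (hc k) hx)
    have hne : ‖(c k - 1) + (x - 1)‖ ≠ ‖(2 : ℚ_[p])‖ := by
      rw [h2]; exact ne_of_lt (lt_of_le_of_lt hsum hpinv1)
    have heq : c k + x = ((c k - 1) + (x - 1)) + 2 := by ring
    rw [heq, Padic.add_eq_max_of_ne hne, h2]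
    exact max_eq_right (le_trans hsum hpinvle)
  have hdne : ∀ k (x : ℚ_[p]), ‖x - 1‖ ≤ (p : ℝ)⁻¹ → c k + x ≠ 0 := by
    intro k x hx h0
    have := hden k x hx
    rw [h0, norm_zero] at this
    norm_num at this
  have h1mem : ‖(1 : ℚ_[p]) - 1‖ ≤ (p : ℝ)⁻¹ := by
    simp [le_of_lt hp0]
  -- f k 1 = 1
  have hf1 : ∀ k, (a k * 1 + b k) / (c k + 1) = 1 := by
    intro k
    rw [mul_one, habc k]
    exact div_self (hdne k 1 h1mem)
  -- numerator bound
  have hnum : ∀ k, ‖a k * c k - b k‖ ≤ (p : ℝ)⁻¹ := by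
    intro k
    have heq : a k * c k - b k
        = (a k - 1) * (c k - 1) + ((a k - 1) + ((c k - 1) - (b k - 1))) := by ring
    rw [heq]
    refine le_trans (Padic.nonarchimedean _ _) (max_le ?_ ?_)
    · rw [norm_mul]
      calc ‖a k - 1‖ * ‖c k - 1‖ ≤ (p : ℝ)⁻¹ * 1 :=
            mul_le_mul (ha k) (le_trans (hc k) hpinvle) (norm_nonneg _) (le_of_lt hp0)
        _ = (p : ℝ)⁻¹ := mul_one _
    · refine le_trans (Padic.nonarchimedean _ _) (max_le (ha k) ?_)
      rw [sub_eq_add_neg]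
      refine le_trans (Padic.nonarchimedean _ _) (max_le (hc k) ?_)
      rw [norm_neg]
      exact hb k
  -- contraction
  have hcontr : ∀ k (x y : ℚ_[p]), ‖x - 1‖ ≤ (p : ℝ)⁻¹ → ‖y - 1‖ ≤ (p : ℝ)⁻¹ →
      ‖(a k * x + b k) / (c k + x) - (a k * y + b k) / (c k + y)‖ ≤ (p : ℝ)⁻¹ * ‖x - y‖ := by
    intro k x y hx hy
    have hdx := hdne k x hx
    have hdy := hdne k y hy
    have heq : (a k * x + b k) / (c k + x) - (a k * y + b k) / (c k + y)
        = (a k * c k - b k) * (x - y) / ((c k + x) * (c k + y)) := by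
      field_simp
      ring
    rw [heq, norm_div, norm_mul, norm_mul, hden k x hx, hden k y hy]
    simp only [mul_one, div_one]
    exact mul_le_mul_of_nonneg_right (hnum k) (norm_nonneg _)
  have hkey : ∀ k (x : ℚ_[p]), ‖x - 1‖ ≤ (p : ℝ)⁻¹ →
      ‖(a k * x + b k) / (c k + x) - 1‖ ≤ (p : ℝ)⁻¹ * ‖x - 1‖ := by
    intro k x hx
    have := hcontr k x 1 hx h1mem
    rwa [hf1 k] at this
  constructor
  · intro n
    rw [hf1 (n + 1), hf1 (n + 2), mul_one]
  · intro u hD hrec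
    have hu : ∀ n, ‖u n - 1‖ ≤ (p : ℝ)⁻¹ := fun n => (hD n).2
    -- step bound
    have hstep : ∀ n, ‖u n - 1‖ ≤ (p : ℝ)⁻¹ * max ‖u (n + 1) - 1‖ ‖u (n + 2) - 1‖ := by
      intro n
      set F1 := (a (n + 1) * u (n + 1) + b (n + 1)) / (c (n + 1) + u (n + 1)) with hF1
      set F2 := (a (n + 2) * u (n + 2) + b (n + 2)) / (c (n + 2) + u (n + 2)) with hF2
      have hF1b : ‖F1 - 1‖ ≤ (p : ℝ)⁻¹ * ‖u (n + 1) - 1‖ := hkey _ _ (hu _)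
      have hF2b : ‖F2 - 1‖ ≤ (p : ℝ)⁻¹ * ‖u (n + 2) - 1‖ := hkey _ _ (hu _)
      have hF1n : ‖F1‖ ≤ 1 := by
        have : F1 = (F1 - 1) + 1 := by ring
        rw [this]
        refine le_trans (Padic.nonarchimedean _ _) (max_le ?_ (by simp))
        refine le_trans hF1b ?_
        calc (p : ℝ)⁻¹ * ‖u (n + 1) - 1‖ ≤ 1 * 1 :=
              mul_le_mul hpinvle (le_trans (hu _) hpinvle) (norm_nonneg _) one_pos.le
          _ = 1 := mul_one _
      have heq : u n - 1 = F1 * (F2 - 1) + (F1 - 1) := by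
        rw [hrec n]; ring
      rw [heq]
      refine le_trans (Padic.nonarchimedean _ _) (max_le ?_ ?_)
      · rw [norm_mul]
        calc ‖F1‖ * ‖F2 - 1‖ ≤ 1 * ((p : ℝ)⁻¹ * ‖u (n + 2) - 1‖) :=
              mul_le_mul hF1n hF2b (norm_nonneg _) one_pos.le
          _ = (p : ℝ)⁻¹ * ‖u (n + 2) - 1‖ := one_mul _
          _ ≤ (p : ℝ)⁻¹ * max ‖u (n + 1) - 1‖ ‖u (n + 2) - 1‖ :=
              mul_le_mul_of_nonneg_left (le_max_right _ _) (le_of_lt hp0)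
      · refine le_trans hF1b ?_
        exact mul_le_mul_of_nonneg_left (le_max_left _ _) (le_of_lt hp0)
    -- iterate
    have hiter : ∀ m n, ‖u n - 1‖ ≤ (p : ℝ)⁻¹ ^ (m + 1) := by
      intro m
      induction m with
      | zero => intro n; simpa using hu n
      | succ m ih =>
        intro n
        refine le_trans (hstep n) ?_
        have : max ‖u (n + 1) - 1‖ ‖u (n + 2) - 1‖ ≤ (p : ℝ)⁻¹ ^ (m + 1) :=
          max_le (ih _) (ih _)
        calc (p : ℝ)⁻¹ * max ‖u (n + 1) - 1‖ ‖u (n + 2) - 1‖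
            ≤ (p : ℝ)⁻¹ * (p : ℝ)⁻¹ ^ (m + 1) :=
              mul_le_mul_of_nonneg_left this (le_of_lt hp0)
          _ = (p : ℝ)⁻¹ ^ (m + 1 + 1) := by ring
    intro n
    have hzero : ‖u n - 1‖ ≤ 0 := by
      have htend : Filter.Tendsto (fun m : ℕ => (p : ℝ)⁻¹ ^ (m + 1)) Filter.atTop (nhds 0) := by
        have := tendsto_pow_atTop_nhds_zero_of_lt_one (le_of_lt hp0) hpinv1
        exact this.comp (Filter.tendsto_add_atTop_nat 1)
      exact ge_of_tendsto' htend (fun m => hiter m n)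
    have : u n - 1 = 0 := norm_le_zero_iff.mp hzero
    exact sub_eq_zero.mp this
end

section
/- Let p ≥ 3 be prime and a, b, c ∈ Q_p with |a − 1|_p ≤ 1/p, |b − 1|_p ≤ 1/p, |c − 1|_p ≤ 1/p. Then the equation u = ((a u + b)/(c + u))^2 has exactly one solution u in the set D = {z ∈ Q_p : |z|_p = 1, |z − 1|_p ≤ 1/p}. -/
theorem stmt13 (p : ℕ) [Fact p.Prime] (hp : 3 ≤ p) (a b c : ℚ_[p])
    (ha : ‖a - 1‖ ≤ (p : ℝ)⁻¹) (hb : ‖b - 1‖ ≤ (p : ℝ)⁻¹) (hc : ‖c - 1‖ ≤ (p : ℝ)⁻¹) :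
    ∃! u : ℚ_[p], (‖u‖ = 1 ∧ ‖u - 1‖ ≤ (p : ℝ)⁻¹) ∧ u = ((a * u + b) / (c + u)) ^ 2 := by
  have hp1 : (1:ℝ) < p := by exact_mod_cast lt_of_lt_of_le (by norm_num) hp
  have hpinv_lt : (p:ℝ)⁻¹ < 1 := inv_lt_one_of_one_lt₀ hp1
  have hpinv_pos : (0:ℝ) ≤ (p:ℝ)⁻¹ := by positivity
  -- ‖2‖ = 1
  have h2 : ‖(2:ℚ_[p])‖ = 1 := by
    have hd : ¬ ((p:ℤ) ∣ 2) := by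
      intro h'
      have := Int.le_of_dvd (by norm_num) h'
      omega
    have hlt := (Padic.norm_intCast_lt_one_iff (p := p) (k := 2)).not.mpr hd
    have hle := Padic.norm_int_le_one (p := p) 2
    push_cast at hlt hle
    linarith [lt_or_ge (‖(2:ℚ_[p])‖) 1 |>.resolve_left hlt]
  -- from ‖x - 1‖ ≤ 1/p we get ‖x‖ = 1
  have norm1 : ∀ x : ℚ_[p], ‖x - 1‖ ≤ (p:ℝ)⁻¹ → ‖x‖ = 1 := by
    intro x hx
    have hne : ‖x - 1‖ ≠ ‖(1:ℚ_[p])‖ := by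
      rw [norm_one]; exact ne_of_lt (lt_of_le_of_lt hx hpinv_lt)
    have : x = (x - 1) + 1 := by ring
    rw [this, Padic.add_eq_max_of_ne hne, norm_one]
    exact max_eq_right (le_of_lt (lt_of_le_of_lt hx hpinv_lt))
  -- ‖a*u+b‖ = 1 and ‖c+u‖ = 1 for u in the ball
  have hAB : ∀ u : ℚ_[p], ‖u - 1‖ ≤ (p:ℝ)⁻¹ → ‖a*u + b‖ = 1 := by
    intro u hu
    have hu1 := norm1 u hu
    have hsmall : ‖a*u + b - 2‖ ≤ (p:ℝ)⁻¹ := by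
      have e : a*u + b - 2 = (a-1)*u + ((u-1) + (b-1)) := by ring
      rw [e]
      refine le_trans (Padic.nonarchimedean _ _) (max_le ?_ ?_)
      · rw [norm_mul, hu1, mul_one]; exact ha
      · exact le_trans (Padic.nonarchimedean _ _) (max_le hu hb)
    have hne : ‖(2:ℚ_[p])‖ ≠ ‖a*u + b - 2‖ := by
      rw [h2]; exact (ne_of_lt (lt_of_le_of_lt hsmall hpinv_lt)).symm
    have e : a*u + b = 2 + (a*u + b - 2) := by ring
    rw [e, Padic.add_eq_max_of_ne hne, h2]
    exact max_eq_left (le_of_lt (lt_of_le_of_lt hsmall hpinv_lt))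
  have hCU : ∀ u : ℚ_[p], ‖u - 1‖ ≤ (p:ℝ)⁻¹ → ‖c + u‖ = 1 := by
    intro u hu
    have hsmall : ‖c + u - 2‖ ≤ (p:ℝ)⁻¹ := by
      have e : c + u - 2 = (c-1) + (u-1) := by ring
      rw [e]
      exact le_trans (Padic.nonarchimedean _ _) (max_le hc hu)
    have hne : ‖(2:ℚ_[p])‖ ≠ ‖c + u - 2‖ := by
      rw [h2]; exact (ne_of_lt (lt_of_le_of_lt hsmall hpinv_lt)).symm
    have e : c + u = 2 + (c + u - 2) := by ring
    rw [e, Padic.add_eq_max_of_ne hne, h2]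
    exact max_eq_left (le_of_lt (lt_of_le_of_lt hsmall hpinv_lt))
  have hCU0 : ∀ u : ℚ_[p], ‖u - 1‖ ≤ (p:ℝ)⁻¹ → c + u ≠ 0 := by
    intro u hu h0
    have := hCU u hu
    rw [h0, norm_zero] at this
    norm_num at this
  -- g(u) = (a u + b)/(c + u) has norm 1 and is ≡ 1
  have hg : ∀ u : ℚ_[p], ‖u - 1‖ ≤ (p:ℝ)⁻¹ → ‖(a*u + b)/(c + u)‖ = 1 := by
    intro u hu
    rw [norm_div, hAB u hu, hCU u hu, div_one]
  have hg1 : ∀ u : ℚ_[p], ‖u - 1‖ ≤ (p:ℝ)⁻¹ → ‖(a*u + b)/(c + u) - 1‖ ≤ (p:ℝ)⁻¹ := by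
    intro u hu
    have hu1 := norm1 u hu
    have e : (a*u + b)/(c + u) - 1 = ((a-1)*u + ((b-1) - (c-1)))/(c + u) := by
      field_simp [hCU0 u hu]
      ring
    rw [e, norm_div, hCU u hu, div_one]
    refine le_trans (Padic.nonarchimedean _ _) (max_le ?_ ?_)
    · rw [norm_mul, hu1, mul_one]; exact ha
    · have : (b-1) - (c-1) = (b-1) + (-(c-1)) := by ring
      rw [this]
      refine le_trans (Padic.nonarchimedean _ _) (max_le hb ?_)
      rw [norm_neg]; exact hc
  -- F maps the ball to itself
  have hmaps : ∀ u : ℚ_[p], ‖u - 1‖ ≤ (p:ℝ)⁻¹ → ‖((a*u + b)/(c + u))^2 - 1‖ ≤ (p:ℝ)⁻¹ := by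
    intro u hu
    set g := (a*u + b)/(c + u) with hgdef
    have e : g^2 - 1 = (g - 1) * (g + 1) := by ring
    have hgp1 : ‖g + 1‖ ≤ 1 := by
      refine le_trans (Padic.nonarchimedean _ _) (max_le ?_ (le_of_eq norm_one))
      rw [hg u hu]
    rw [e, norm_mul]
    calc ‖g - 1‖ * ‖g + 1‖ ≤ (p:ℝ)⁻¹ * 1 :=
          mul_le_mul (hg1 u hu) hgp1 (norm_nonneg _) hpinv_pos
      _ = (p:ℝ)⁻¹ := mul_one _
  -- contraction estimate
  have hacb : ‖a*c - b‖ ≤ (p:ℝ)⁻¹ := by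
    have hc1 := norm1 c hc
    have e : a*c - b = (a-1)*c + ((c-1) - (b-1)) := by ring
    rw [e]
    refine le_trans (Padic.nonarchimedean _ _) (max_le ?_ ?_)
    · rw [norm_mul, hc1, mul_one]; exact ha
    · have : (c-1) - (b-1) = (c-1) + (-(b-1)) := by ring
      rw [this]
      refine le_trans (Padic.nonarchimedean _ _) (max_le hc ?_)
      rw [norm_neg]; exact hb
  have contract : ∀ u v : ℚ_[p], ‖u - 1‖ ≤ (p:ℝ)⁻¹ → ‖v - 1‖ ≤ (p:ℝ)⁻¹ →
      ‖((a*u + b)/(c + u))^2 - ((a*v + b)/(c + v))^2‖ ≤ (p:ℝ)⁻¹ * ‖u - v‖ := by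
    intro u v hu hv
    set gu := (a*u + b)/(c + u) with hgu
    set gv := (a*v + b)/(c + v) with hgv
    have hgdiff : gu - gv = (a*c - b) * (u - v) / ((c + u) * (c + v)) := by
      rw [hgu, hgv]
      field_simp [hCU0 u hu, hCU0 v hv]
      ring
    have hgd : ‖gu - gv‖ ≤ (p:ℝ)⁻¹ * ‖u - v‖ := by
      rw [hgdiff, norm_div, norm_mul, norm_mul, hCU u hu, hCU v hv, mul_one, div_one]
      exact mul_le_mul_of_nonneg_right hacb (norm_nonneg _)
    have e : gu^2 - gv^2 = (gu + gv) * (gu - gv) := by ring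
    have hsum : ‖gu + gv‖ ≤ 1 := by
      refine le_trans (Padic.nonarchimedean _ _) (max_le ?_ ?_)
      · rw [hg u hu]
      · rw [hg v hv]
    rw [e, norm_mul]
    calc ‖gu + gv‖ * ‖gu - gv‖ ≤ 1 * ((p:ℝ)⁻¹ * ‖u - v‖) :=
          mul_le_mul hsum hgd (norm_nonneg _) (by norm_num)
      _ = (p:ℝ)⁻¹ * ‖u - v‖ := one_mul _
  -- set up Banach fixed point on the closed ball D
  set D : Set ℚ_[p] := Metric.closedBall (1:ℚ_[p]) (p:ℝ)⁻¹ with hD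
  have hmemD : ∀ x : ℚ_[p], x ∈ D ↔ ‖x - 1‖ ≤ (p:ℝ)⁻¹ := by
    intro x
    rw [hD, Metric.mem_closedBall, dist_eq_norm]
  have hDclosed : IsClosed D := Metric.isClosed_closedBall
  haveI : CompleteSpace D := hDclosed.completeSpace_coe
  haveI : Nonempty D := ⟨⟨1, by rw [hmemD]; simp [hpinv_pos]⟩⟩
  set f : D → D := fun x =>
    ⟨((a * x.1 + b)/(c + x.1))^2, (hmemD _).mpr (hmaps x.1 ((hmemD _).mp x.2))⟩ with hf
  have hK : (⟨(p:ℝ)⁻¹, hpinv_pos⟩ : NNReal) < 1 := by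
    exact (NNReal.coe_lt_coe (r₁ := ⟨(p:ℝ)⁻¹, hpinv_pos⟩) (r₂ := 1)).mp hpinv_lt
  have hlip : LipschitzWith ⟨(p:ℝ)⁻¹, hpinv_pos⟩ f := by
    apply LipschitzWith.of_dist_le_mul
    intro x y
    rw [Subtype.dist_eq, Subtype.dist_eq, dist_eq_norm, dist_eq_norm]
    exact contract x.1 y.1 ((hmemD _).mp x.2) ((hmemD _).mp y.2)
  have hcontr : ContractingWith ⟨(p:ℝ)⁻¹, hpinv_pos⟩ f := ⟨hK, hlip⟩
  set uD : D := ContractingWith.fixedPoint f hcontr with huDdef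
  have hufix : f uD = uD := hcontr.fixedPoint_isFixedPt
  set u : ℚ_[p] := uD.1 with hudef
  have hueq : u = ((a * u + b)/(c + u))^2 := (congrArg Subtype.val hufix).symm
  have huball : ‖u - 1‖ ≤ (p:ℝ)⁻¹ := (hmemD _).mp uD.2
  refine ⟨u, ⟨⟨norm1 u huball, huball⟩, hueq⟩, ?_⟩
  rintro v ⟨⟨-, hvball⟩, hveq⟩
  by_contra hne
  have hpos : 0 < ‖v - u‖ := by
    rw [norm_pos_iff]
    intro h0
    exact hne (sub_eq_zero.mp h0)
  have : ‖v - u‖ ≤ (p:ℝ)⁻¹ * ‖v - u‖ := by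
    calc ‖v - u‖ = ‖((a*v + b)/(c + v))^2 - ((a*u + b)/(c + u))^2‖ := by
          rw [← hveq, ← hueq]
      _ ≤ (p:ℝ)⁻¹ * ‖v - u‖ := contract v u hvball huball
  nlinarith
end
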